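/- Let w be a finite word over an alphabet A and let x ∈ A be a letter that does not occur in w. Then Pal(w·x) = Pal(w)·x·Pal(w). -/
import Mathlib


/-- The palindromic right closure `w⁽⁺⁾`: the shortest palindrome having `w` as a prefix. -/
def palClosure {A : Type*} [DecidableEq A] (w : List A) : List A :=
  w ++ (w.take (Nat.find (⟨w.length, by simp⟩ :
    ∃ i, (w.drop i).reverse = w.drop i))).reverse

/-- Iterated palindromic closure: `Pal ε = ε`, `Pal (w·x) = (Pal w · x)⁽⁺⁾`. -/
def Pal {A : Type*} [DecidableEq A] (w : List A) : List A :=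
  w.foldl (fun p x => palClosure (p ++ [x])) []

/-- `u` is a factor of the infinite word `s`. -/
def IsFactorOf {A : Type*} (u : List A) (s : ℕ → A) : Prop :=
  ∃ i : ℕ, u = (List.range u.length).map (fun j => s (i + j))

/-- `s` is balanced. -/
def IsBalanced {A : Type*} [DecidableEq A] (s : ℕ → A) : Prop :=
  ∀ u v : List A, IsFactorOf u s → IsFactorOf v s → u.length = v.length →
    ∀ a : A, u.count a ≤ v.count a + 1

/-- `u` is a prefix of the infinite word `s`. -/
def IsPrefixOf {A : Type*} (u : List A) (s : ℕ → A) : Prop :=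
  u = (List.range u.length).map s

/-- `s` is a standard episturmian sequence with directive sequence `Δ`. -/
def IsStdEpisturmian {A : Type*} [DecidableEq A] (s Δ : ℕ → A) : Prop :=
  ∀ n : ℕ, IsPrefixOf (Pal ((List.range n).map Δ)) s

/-- Concatenation of a finite word and an infinite word. -/
def wcat {A : Type*} (u : List A) (s : ℕ → A) : ℕ → A :=
  fun n => if h : n < u.length then u.get ⟨n, h⟩ else s (n - u.length)

/-- The constant infinite word `c^ω`. -/
def constW {A : Type*} (c : A) : ℕ → A := fun _ => c

/-- The purely periodic infinite word `w^ω` (`d` is a default letter, irrelevant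
when `w` is nonempty). -/
def perW {A : Type*} (w : List A) (d : A) : ℕ → A :=
  fun n => w.getD (n % w.length) d

/-- At least three distinct letters occur in `s`. -/
def ThreeLetters {A : Type*} (s : ℕ → A) : Prop :=
  ∃ a b c : A, a ≠ b ∧ a ≠ c ∧ b ≠ c ∧
    a ∈ Set.range s ∧ b ∈ Set.range s ∧ c ∈ Set.range s

lemma pal_snoc {A : Type*} [DecidableEq A] (w : List A) (x : A) :
    Pal (w ++ [x]) = palClosure (Pal w ++ [x]) := by
  simp [Pal, List.foldl_append]

lemma palClosure_reverse {A : Type*} [DecidableEq A] (w : List A) :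
    (palClosure w).reverse = palClosure w := by
  unfold palClosure
  set i := Nat.find (⟨w.length, by simp⟩ : ∃ i, (w.drop i).reverse = w.drop i) with hi
  have hspec := Nat.find_spec (⟨w.length, by simp⟩ :
    ∃ i, (w.drop i).reverse = w.drop i)
  rw [← hi] at hspec
  rw [List.reverse_append, List.reverse_reverse]
  nth_rewrite 2 [← List.take_append_drop i w]
  rw [List.reverse_append, hspec, ← List.append_assoc, List.take_append_drop]

lemma palClosure_subset {A : Type*} [DecidableEq A] {w : List A} {a : A}
    (h : a ∈ palClosure w) : a ∈ w := by
  unfold palClosure at h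
  rcases List.mem_append.1 h with h | h
  · exact h
  · exact List.take_subset _ _ (List.mem_reverse.1 h)

lemma pal_subset {A : Type*} [DecidableEq A] (w : List A) {a : A}
    (h : a ∈ Pal w) : a ∈ w := by
  induction w using List.reverseRecOn with
  | nil => simp [Pal] at h
  | append_singleton w x ih =>
    rw [pal_snoc] at h
    rcases List.mem_append.1 (palClosure_subset h) with h | h
    · exact List.mem_append.2 (Or.inl (ih h))
    · exact List.mem_append.2 (Or.inr h)

lemma pal_reverse {A : Type*} [DecidableEq A] (w : List A) :
    (Pal w).reverse = Pal w := by
  induction w using List.reverseRecOn with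
  | nil => simp [Pal]
  | append_singleton w x ih => rw [pal_snoc]; exact palClosure_reverse _

lemma palClosure_snoc_of_not_mem {A : Type*} [DecidableEq A] (p : List A) (x : A)
    (hp : p.reverse = p) (hx : x ∉ p) :
    palClosure (p ++ [x]) = p ++ [x] ++ p := by
  unfold palClosure
  have key : Nat.find (⟨(p ++ [x]).length, by simp⟩ :
      ∃ i, ((p ++ [x]).drop i).reverse = (p ++ [x]).drop i) = p.length := by
    rw [Nat.find_eq_iff]
    constructor
    · simp
    · intro m hm h
      rw [List.drop_append_of_le_length hm.le] at h
      have hq : p.drop m ≠ [] := by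
        simp only [ne_eq, List.drop_eq_nil_iff]
        omega
      have hhead : (p.drop m ++ [x]).head? = some x := by
        have := congrArg List.head? h.symm
        rwa [List.reverse_append, List.reverse_singleton, List.singleton_append,
          List.head?_cons] at this
      rw [List.head?_append_of_ne_nil _ hq] at hhead
      have : x ∈ p.drop m := by
        rcases List.exists_cons_of_ne_nil hq with ⟨a, t, hat⟩
        rw [hat] at hhead ⊢
        simp only [List.head?_cons, Option.some.injEq] at hhead
        simp [hhead]
      exact hx (List.drop_subset _ _ this)
  rw [key, List.take_left, hp]

/-- Lemma (Justin): if `x` does not occur in `w` then `Pal(w·x) = Pal(w)·x·Pal(w)`. -/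
theorem pal_append_of_not_mem {A : Type*} [DecidableEq A] (w : List A) (x : A)
    (hx : x ∉ w) :
    Pal (w ++ [x]) = Pal w ++ [x] ++ Pal w := by
  rw [pal_snoc]
  exact palClosure_snoc_of_not_mem _ _ (pal_reverse w) (fun h => hx (pal_subset w h))
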